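/- Let d ≥ 2 and let G be the standard grid graph on ℤ^d, where x and y are adjacent if and only if ∑_{i=1}^d |xᵢ − yᵢ| = 1. Let 𝒯 be a collection of finite subsets of ℤ^d, each inducing a connected subgraph of G and each having no holes (i.e., the complement ℤ^d \ K has no finite connected component in G), such that: every edge of G joins two vertices lying in a common member of 𝒯, and for all distinct K, L ∈ 𝒯, either N³(K) ∩ L = ∅, or N³(K) ⊆ L, or N³(L) ⊆ K, where N³(K) = {x ∈ ℤ^d : dist_G(x, K) ≤ 3}. Then 𝒯 is a connected toast: in particular, for every L ∈ 𝒯, the subgraph of G induced on L \ ⋃{K ∈ 𝒯 : K ⊊ L} is connected. (This is the combinatorial core of the paper's Proposition 2.4, showing that a 3-toast with hole-free tiles in ℤ^d satisfies the connectivity property (3) of a connected toast.) -/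

import Mathlib

/-- The standard grid graph on `ℤ^d`: `x` and `y` are adjacent iff `∑ i, |xᵢ − yᵢ| = 1`. -/
def gridGraph (d : ℕ) : SimpleGraph (Fin d → ℤ) where
  Adj x y := (∑ i, |x i - y i|) = 1
  symm := by
    refine ⟨fun x y h => ?_⟩
    simpa [abs_sub_comm] using h
  loopless := by
    refine ⟨fun x h => ?_⟩
    simp at h

/-- The neighborhood `N(K)` of a set `K` of vertices: all vertices adjacent to some
vertex of `K`. -/
def SetNbhd {V : Type*} (G : SimpleGraph V) (K : Set V) : Set V :=
  {x | ∃ y ∈ K, G.Adj x y}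

/-- The `k`-neighborhood `N^k(K)`: all vertices at graph distance at most `k` from `K`. -/
def SetNbhdK {V : Type*} (G : SimpleGraph V) (k : ℕ) (K : Set V) : Set V :=
  {x | ∃ y ∈ K, G.Reachable x y ∧ G.dist x y ≤ k}

/-- A finite set `K` of vertices has no holes if the complement of `K` has no finite
connected component (in the induced subgraph on the complement). -/
def HasNoHoles {V : Type*} (G : SimpleGraph V) (K : Set V) : Prop :=
  ∀ C : (G.induce Kᶜ).ConnectedComponent, C.supp.Infinite

/-- A connected toast in a graph `G`: a collection `T` of finite subsets of the vertex
set, each inducing a connected subgraph, such that (1) every edge of `G` lies inside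
some member of `T`, (2) distinct members `K, L` satisfy `(K ∪ N(K)) ∩ L = ∅`, or
`K ∪ N(K) ⊆ L`, or `L ∪ N(L) ⊆ K`, and (3) for each `K ∈ T`, the subgraph induced on
`K` minus the union of the members of `T` properly contained in `K` is connected. -/
def IsConnectedToast {V : Type*} (G : SimpleGraph V) (T : Set (Set V)) : Prop :=
  (∀ K ∈ T, K.Finite ∧ (G.induce K).Connected) ∧
  (∀ x y : V, G.Adj x y → ∃ K ∈ T, x ∈ K ∧ y ∈ K) ∧
  (∀ K ∈ T, ∀ L ∈ T, K ≠ L →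
    (K ∪ SetNbhd G K) ∩ L = ∅ ∨ K ∪ SetNbhd G K ⊆ L ∨ L ∪ SetNbhd G L ⊆ K) ∧
  (∀ K ∈ T, (G.induce (K \ ⋃₀ {L | L ∈ T ∧ L ⊂ K})).Connected)



namespace ThreeToastAux

open SimpleGraph Relation

variable {d : ℕ}

/-- Steps: a coordinate and a sign. -/
abbrev Stp (d : ℕ) := Fin d × Bool

def vec (s : Stp d) : Fin d → ℤ := Pi.single s.1 (cond s.2 1 (-1))

lemma vec_apply (s : Stp d) (j : Fin d) :
    vec s j = if j = s.1 then (cond s.2 1 (-1)) else 0 := by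
  simp [vec, Pi.single_apply]

lemma vec_inv (s : Stp d) : vec (s.1, !s.2) = - vec s := by
  funext j
  simp only [vec_apply, Pi.neg_apply]
  by_cases h : j = s.1 <;> cases hs : s.2 <;> simp [h]

def endp (u : Fin d → ℤ) (w : List (Stp d)) : Fin d → ℤ := u + (w.map vec).sum

@[simp] lemma endp_nil (u : Fin d → ℤ) : endp u ([] : List (Stp d)) = u := by simp [endp]

@[simp] lemma endp_cons (u : Fin d → ℤ) (s : Stp d) (t : List (Stp d)) :
    endp u (s :: t) = endp (u + vec s) t := by
  simp [endp, add_assoc]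

lemma endp_append (u : Fin d → ℤ) (a b : List (Stp d)) :
    endp u (a ++ b) = endp (endp u a) b := by
  simp [endp, add_assoc]

def vlist (u : Fin d → ℤ) : List (Stp d) → List (Fin d → ℤ)
  | [] => [u]
  | s :: t => u :: vlist (u + vec s) t

@[simp] lemma vlist_nil (u : Fin d → ℤ) : vlist u ([] : List (Stp d)) = [u] := rfl

@[simp] lemma vlist_cons (u : Fin d → ℤ) (s : Stp d) (t : List (Stp d)) :
    vlist u (s :: t) = u :: vlist (u + vec s) t := rfl

lemma mem_vlist_self (u : Fin d → ℤ) (w : List (Stp d)) : u ∈ vlist u w := by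
  cases w <;> simp

lemma endp_mem_vlist : ∀ (w : List (Stp d)) (u : Fin d → ℤ), endp u w ∈ vlist u w
  | [], u => by simp
  | s :: t, u => by
    rw [endp_cons, vlist_cons]
    exact List.mem_cons_of_mem _ (endp_mem_vlist t (u + vec s))

lemma mem_vlist_append : ∀ (a : List (Stp d)) (u : Fin d → ℤ) (b : List (Stp d))
    (z : Fin d → ℤ),
    (z ∈ vlist u (a ++ b) ↔ z ∈ vlist u a ∨ z ∈ vlist (endp u a) b)
  | [], u, b, z => by
    simp only [List.nil_append, vlist_nil, endp_nil, List.mem_singleton]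
    constructor
    · exact fun h => Or.inr h
    · rintro (rfl | h)
      · exact mem_vlist_self _ b
      · exact h
  | s :: t, u, b, z => by
    simp only [List.cons_append, vlist_cons, List.mem_cons, endp_cons]
    rw [mem_vlist_append t (u + vec s) b z]
    tauto

/-- The moves: swapping steps in different coordinates, cancelling inverse pairs,
and acting deeper in the list. -/
inductive Move : List (Stp d) → List (Stp d) → Prop
  | swap (a b : Stp d) (t : List (Stp d)) (h : a.1 ≠ b.1) : Move (a :: b :: t) (b :: a :: t)
  | cancel (a : Stp d) (t : List (Stp d)) : Move (a :: (a.1, !a.2) :: t) t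
  | cons (a : Stp d) {t t' : List (Stp d)} (h : Move t t') : Move (a :: t) (a :: t')

abbrev Moves (w w' : List (Stp d)) : Prop := Relation.ReflTransGen Move w w'

lemma Moves.consl (a : Stp d) {t t' : List (Stp d)} (h : Moves t t') :
    Moves (a :: t) (a :: t') :=
  Relation.ReflTransGen.lift (fun l => a :: l) (fun _ _ h => Move.cons a h) _ _ h

lemma Moves.appendl (pre : List (Stp d)) {t t' : List (Stp d)} (h : Moves t t') :
    Moves (pre ++ t) (pre ++ t') := by
  induction pre with
  | nil => simpa using h
  | cons a pre ih => simpa using ih.consl a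

lemma bubble (i : Fin d) (s : Bool) (mid post : List (Stp d))
    (hmid : ∀ x ∈ mid, x.1 ≠ i) :
    Moves ((i, s) :: (mid ++ (i, !s) :: post)) (mid ++ post) := by
  induction mid with
  | nil => exact ReflTransGen.single (Move.cancel (i, s) post)
  | cons b mid ih =>
    have h1 : Move ((i, s) :: (b :: mid ++ (i, !s) :: post))
        (b :: (i, s) :: (mid ++ (i, !s) :: post)) := by
      exact Move.swap (i, s) b _ (fun h => (hmid b (by simp)) h.symm)
    refine ReflTransGen.head h1 ?_
    exact (ih (fun x hx => hmid x (by simp [hx]))).consl b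

lemma split_first (i : Fin d) (t : List (Stp d)) (h : ∃ x ∈ t, x.1 = i) :
    ∃ mid c post, t = mid ++ c :: post ∧ c.1 = i ∧ ∀ x ∈ mid, x.1 ≠ i := by
  induction t with
  | nil => simp at h
  | cons b t ih =>
    by_cases hb : b.1 = i
    · exact ⟨[], b, t, by simp, hb, by simp⟩
    · have ht : ∃ x ∈ t, x.1 = i := by
        rcases h with ⟨x, hx, hxi⟩
        rcases List.mem_cons.mp hx with rfl | hx'
        · exact absurd hxi hb
        · exact ⟨x, hx', hxi⟩
      obtain ⟨mid, c, post, heq, hc, hmid⟩ := ih ht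
      refine ⟨b :: mid, c, post, by simp [heq], hc, ?_⟩
      intro x hx
      rcases List.mem_cons.mp hx with rfl | hx'
      · exact hb
      · exact hmid x hx'

lemma bool_not_eq {x y : Bool} (h : ¬ x = y) : x = !y := by
  revert h; cases x <;> cases y <;> decide

lemma pair_split : ∀ (n : ℕ) (w : List (Stp d)) (i : Fin d), w.length ≤ n →
    (i, true) ∈ w → (i, false) ∈ w →
    ∃ pre s mid post, w = pre ++ (i, s) :: (mid ++ (i, !s) :: post) ∧ ∀ x ∈ mid, x.1 ≠ i := by
  intro n
  induction n with
  | zero =>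
    intro w i hlen ht _
    rw [Nat.le_zero, List.length_eq_zero_iff] at hlen
    subst hlen; simp at ht
  | succ n ih =>
    intro w i hlen ht hf
    match w with
    | [] => simp at ht
    | (b1, b2) :: t =>
      by_cases hb : b1 = i
      · subst hb
        have hopp' : (b1, !b2) ∈ t := by
          have hopp : (b1, !b2) ∈ (b1, b2) :: t := by
            cases b2
            · simpa using ht
            · simpa using hf
          rcases List.mem_cons.mp hopp with hh | hh
          · have := congrArg Prod.snd hh
            simp at this
          · exact hh
        obtain ⟨mid, c, post, heq, hc, hmid⟩ :=
          split_first b1 t ⟨(b1, !b2), hopp', rfl⟩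
        by_cases hcs : c.2 = !b2
        · refine ⟨[], b2, mid, post, ?_, hmid⟩
          have hceq : c = (b1, !b2) := by
            rcases c with ⟨c1, c2⟩
            simp only at hc hcs
            simp [hc, hcs]
          rw [List.nil_append, heq, hceq]
        · have hcb : c = (b1, b2) := by
            rcases c with ⟨c1, c2⟩
            simp only at hc hcs
            have : c2 = b2 := by
              have h2 := bool_not_eq hcs
              simp at h2
              exact h2
            simp [hc, this]
          have hlen' : (c :: post).length ≤ n := by
            have h1 : t.length ≤ n := Nat.le_of_succ_le_succ hlen
            have h2 : (c :: post).length ≤ t.length := by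
              rw [heq]; simp only [List.length_append, List.length_cons]; omega
            omega
          have hmem1 : (b1, b2) ∈ c :: post := by
            rw [← hcb]; exact List.mem_cons_self
          have hmem2 : (b1, !b2) ∈ c :: post := by
            rw [heq] at hopp'
            rcases List.mem_append.mp hopp' with hh | hh
            · exact absurd rfl (hmid _ hh)
            · exact hh
          have hall : ∀ x : Bool, (b1, x) ∈ c :: post := by
            intro x
            by_cases hx : x = b2
            · rw [hx]; exact hmem1
            · rw [bool_not_eq hx]; exact hmem2
          obtain ⟨pre', s, mid', post', heq', hmid'⟩ :=
            ih (c :: post) b1 hlen' (hall true) (hall false)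
          refine ⟨(b1, b2) :: (mid ++ pre'), s, mid', post', ?_, hmid'⟩
          rw [heq, heq']
          simp
      · have ht' : (i, true) ∈ t := by
          rcases List.mem_cons.mp ht with hh | hh
          · exact absurd (congrArg Prod.fst hh).symm hb
          · exact hh
        have hf' : (i, false) ∈ t := by
          rcases List.mem_cons.mp hf with hh | hh
          · exact absurd (congrArg Prod.fst hh).symm hb
          · exact hh
        obtain ⟨pre, s, mid, post, heq, hmid⟩ :=
          ih t i (Nat.le_of_succ_le_succ hlen) ht' hf'
        exact ⟨(b1, b2) :: pre, s, mid, post, by simp [heq], hmid⟩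

end ThreeToastAux

-- chunk 2 (appended to a.lean for testing)
namespace ThreeToastAux2
open SimpleGraph Relation ThreeToastAux
variable {d : ℕ}

lemma sum_vec_coord (w : List (Stp d)) (i : Fin d) :
    (w.map vec).sum i = (w.count (i, true) : ℤ) - (w.count (i, false) : ℤ) := by
  induction w with
  | nil => simp
  | cons s t ih =>
    rcases s with ⟨j, bb⟩
    have hv : (vec ((j, bb) : Stp d)) i = if i = j then (cond bb 1 (-1)) else 0 :=
      vec_apply _ i
    have : ((((j, bb) :: t).map vec).sum) i = vec ((j, bb) : Stp d) i + (t.map vec).sum i := by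
      simp
    rw [this, hv, ih]
    by_cases hj : i = j
    · subst hj
      cases bb <;> simp [List.count_cons] <;> push_cast <;> ring
    · have h1 : ((i, true) : Stp d) ≠ (j, bb) := by
        intro h; exact hj (congrArg Prod.fst h)
      have h2 : ((i, false) : Stp d) ≠ (j, bb) := by
        intro h; exact hj (congrArg Prod.fst h)
      simp [List.count_cons, h1, h2, hj, Ne.symm hj]

lemma reduce_aux : ∀ (n : ℕ) (w : List (Stp d)), w.length ≤ n →
    (w.map vec).sum = 0 → Moves w [] := by
  intro n
  induction n with
  | zero =>
    intro w hlen _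
    rw [Nat.le_zero, List.length_eq_zero_iff] at hlen
    subst hlen; exact ReflTransGen.refl
  | succ n ih =>
    intro w hlen hsum
    match w with
    | [] => exact ReflTransGen.refl
    | a :: t =>
      have hcoord : ((((a :: t)).map vec).sum) a.1 = 0 := by rw [hsum]; rfl
      rw [sum_vec_coord] at hcoord
      have hceq : (a :: t).count (a.1, true) = (a :: t).count (a.1, false) := by omega
      have hmema : (a.1, a.2) ∈ a :: t := by
        rw [Prod.mk.eta]; exact List.mem_cons_self
      have hpos : 0 < (a :: t).count (a.1, a.2) := List.count_pos_iff.mpr hmema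
      have hmt : ((a.1, true) : Stp d) ∈ a :: t := by
        rw [← List.count_pos_iff]
        cases hb : a.2
        · rw [hceq]; rw [hb] at hpos; omega
        · rw [hb] at hpos; omega
      have hmf : ((a.1, false) : Stp d) ∈ a :: t := by
        rw [← List.count_pos_iff]
        cases hb : a.2
        · rw [hb] at hpos; omega
        · rw [← hceq]; rw [hb] at hpos; omega
      obtain ⟨pre, s, mid, post, heq, hmid⟩ :=
        pair_split (n + 1) (a :: t) a.1 hlen hmt hmf
      have hmove : Moves (a :: t) (pre ++ (mid ++ post)) := by
        rw [heq]
        exact Moves.appendl pre (bubble a.1 s mid post hmid)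
      refine hmove.trans (ih (pre ++ (mid ++ post)) ?_ ?_)
      · have : (a :: t).length = pre.length + (mid.length + post.length + 2) := by
          rw [heq]; simp only [List.length_append, List.length_cons]; omega
        have h2 : (pre ++ (mid ++ post)).length = pre.length + (mid.length + post.length) := by
          simp
        omega
      · have h0 := hsum
        rw [heq] at h0
        simp only [List.map_append, List.sum_append, List.map_cons, List.sum_cons] at h0 ⊢
        rw [show vec ((a.1, !s) : Stp d) = - vec ((a.1, s) : Stp d) from vec_inv (a.1, s)] at h0
        linear_combination h0

theorem reduce_to_nil (w : List (Stp d)) (hsum : (w.map vec).sum = 0) : Moves w [] :=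
  reduce_aux w.length w le_rfl hsum

open Classical in
noncomputable def ff (K : Set (Fin d → ℤ)) (c : (Fin d → ℤ) → Prop) (p q : Fin d → ℤ) : ℤ :=
  (if p ∉ K ∧ q ∈ K ∧ c p then 1 else 0) - (if p ∈ K ∧ q ∉ K ∧ c q then 1 else 0)

lemma ffWW {K : Set (Fin d → ℤ)} (c : (Fin d → ℤ) → Prop) {p q : Fin d → ℤ}
    (hp : p ∉ K) (hq : q ∉ K) : ff K c p q = 0 := by
  simp [ff, hp, hq]

lemma ffBB {K : Set (Fin d → ℤ)} (c : (Fin d → ℤ) → Prop) {p q : Fin d → ℤ}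
    (hp : p ∈ K) (hq : q ∈ K) : ff K c p q = 0 := by
  simp [ff, hp, hq]

open Classical in
lemma ffWB {K : Set (Fin d → ℤ)} (c : (Fin d → ℤ) → Prop) {p q : Fin d → ℤ}
    (hp : p ∉ K) (hq : q ∈ K) : ff K c p q = if c p then 1 else 0 := by
  simp [ff, hp, hq]

open Classical in
lemma ffBW {K : Set (Fin d → ℤ)} (c : (Fin d → ℤ) → Prop) {p q : Fin d → ℤ}
    (hp : p ∈ K) (hq : q ∉ K) : ff K c p q = - if c q then 1 else 0 := by
  simp [ff, hp, hq]

lemma ff_cancel (K : Set (Fin d → ℤ)) (c : (Fin d → ℤ) → Prop) (p q : Fin d → ℤ) :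
    ff K c p q + ff K c q p = 0 := by
  classical
  by_cases h1 : p ∈ K <;> by_cases h2 : q ∈ K <;> simp [ff, h1, h2] <;> ring

noncomputable def J (K : Set (Fin d → ℤ)) (c : (Fin d → ℤ) → Prop) :
    (Fin d → ℤ) → List (Stp d) → ℤ
  | _, [] => 0
  | u, s :: t => ff K c u (u + vec s) + J K c (u + vec s) t

@[simp] lemma J_nil (K : Set (Fin d → ℤ)) (c : (Fin d → ℤ) → Prop) (u : Fin d → ℤ) :
    J K c u [] = 0 := rfl

lemma J_cons (K : Set (Fin d → ℤ)) (c : (Fin d → ℤ) → Prop) (u : Fin d → ℤ)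
    (s : Stp d) (t : List (Stp d)) :
    J K c u (s :: t) = ff K c u (u + vec s) + J K c (u + vec s) t := rfl

lemma J_append (K : Set (Fin d → ℤ)) (c : (Fin d → ℤ) → Prop) :
    ∀ (a : List (Stp d)) (u : Fin d → ℤ) (b : List (Stp d)),
    J K c u (a ++ b) = J K c u a + J K c (endp u a) b
  | [], u, b => by simp
  | s :: t, u, b => by
    rw [List.cons_append, J_cons, J_cons, J_append K c t (u + vec s) b, endp_cons]
    ring

lemma J_move {K : Set (Fin d → ℤ)} {c : (Fin d → ℤ) → Prop}
    (hsq : ∀ (z : Fin d → ℤ) (a b : Stp d), a.1 ≠ b.1 →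
      ff K c z (z + vec a) + ff K c (z + vec a) (z + vec a + vec b)
        = ff K c z (z + vec b) + ff K c (z + vec b) (z + vec b + vec a)) :
    ∀ {w w' : List (Stp d)}, Move w w' → ∀ u, J K c u w = J K c u w' := by
  intro w w' h
  induction h with
  | swap a b t hab =>
    intro u
    have hc : u + vec b + vec a = u + vec a + vec b := by abel
    rw [J_cons, J_cons, J_cons, J_cons, hc]
    have h2 := hsq u a b hab
    rw [hc] at h2
    linarith
  | cancel a t =>
    intro u
    have hv : u + vec a + vec (a.1, !a.2) = u := by rw [vec_inv]; abel
    rw [J_cons, J_cons, hv]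
    have := ff_cancel K c u (u + vec a)
    linarith
  | cons a h ih =>
    intro u
    rw [J_cons, J_cons, ih]

lemma J_moves {K : Set (Fin d → ℤ)} {c : (Fin d → ℤ) → Prop}
    (hsq : ∀ (z : Fin d → ℤ) (a b : Stp d), a.1 ≠ b.1 →
      ff K c z (z + vec a) + ff K c (z + vec a) (z + vec a + vec b)
        = ff K c z (z + vec b) + ff K c (z + vec b) (z + vec b + vec a)) :
    ∀ {w w' : List (Stp d)}, Moves w w' → ∀ u, J K c u w = J K c u w' := by
  intro w w' h
  induction h with
  | refl => intro u; rfl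
  | tail _ h2 ih => intro u; rw [ih u, J_move hsq h2 u]

end ThreeToastAux2

namespace ThreeToastAux3
open SimpleGraph Relation ThreeToastAux ThreeToastAux2
variable {d : ℕ}

lemma grid_adj_iff {x y : Fin d → ℤ} :
    (gridGraph d).Adj x y ↔ (∑ i, |x i - y i|) = 1 := Iff.rfl

lemma sum_abs_vec (s : Stp d) : (∑ i, |vec s i|) = 1 := by
  have h : ∀ i, |vec s i| = if i = s.1 then 1 else 0 := by
    intro i
    rw [vec_apply]
    by_cases h : i = s.1 <;> cases hs : s.2 <;> simp [h]
  rw [Finset.sum_congr rfl fun i _ => h i]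
  simp

lemma adj_add_vec (x : Fin d → ℤ) (s : Stp d) : (gridGraph d).Adj x (x + vec s) := by
  rw [grid_adj_iff]
  have h : ∀ i, |x i - (x + vec s) i| = |vec s i| := by
    intro i
    have h2 : x i - (x + vec s) i = -(vec s i) := by simp
    rw [h2, abs_neg]
  rw [Finset.sum_congr rfl fun i _ => h i, sum_abs_vec]

lemma exists_step_of_adj {x y : Fin d → ℤ} (h : (gridGraph d).Adj x y) :
    ∃ s : Stp d, y = x + vec s := by
  rw [grid_adj_iff] at h
  have hex : ∃ i, x i - y i ≠ 0 := by
    by_contra hc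
    push_neg at hc
    have hs0 : (∑ i, |x i - y i|) = 0 := Finset.sum_eq_zero fun i _ => by rw [hc i, abs_zero]
    omega
  obtain ⟨i, hi⟩ := hex
  have hsplit : ∑ j ∈ Finset.univ.erase i, |x j - y j| + |x i - y i| = 1 := by
    rw [Finset.sum_erase_add _ _ (Finset.mem_univ i)]
    exact h
  have h1le : 1 ≤ |x i - y i| := Int.one_le_abs hi
  have hnn : 0 ≤ ∑ j ∈ Finset.univ.erase i, |x j - y j| :=
    Finset.sum_nonneg fun j _ => abs_nonneg _
  have habs : |x i - y i| = 1 := by omega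
  have hrest : ∑ j ∈ Finset.univ.erase i, |x j - y j| = 0 := by omega
  have hzero : ∀ j, j ≠ i → x j = y j := by
    intro j hj
    have := (Finset.sum_eq_zero_iff_of_nonneg fun k _ => abs_nonneg (x k - y k)).mp hrest j
      (by simp [hj])
    have := abs_eq_zero.mp this
    omega
  rcases (abs_eq (by norm_num : (0:ℤ) ≤ 1)).mp habs with hcase | hcase
  · refine ⟨(i, false), funext fun j => ?_⟩
    by_cases hj : j = i
    · subst hj
      have : vec ((j, false) : Stp d) j = -1 := by rw [vec_apply]; simp
      rw [Pi.add_apply, this]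
      omega
    · have : vec ((i, false) : Stp d) j = 0 := by rw [vec_apply]; simp [hj]
      rw [Pi.add_apply, this, hzero j hj]
      ring
  · refine ⟨(i, true), funext fun j => ?_⟩
    by_cases hj : j = i
    · subst hj
      have : vec ((j, true) : Stp d) j = 1 := by rw [vec_apply]; simp
      rw [Pi.add_apply, this]
      omega
    · have : vec ((i, true) : Stp d) j = 0 := by rw [vec_apply]; simp [hj]
      rw [Pi.add_apply, this, hzero j hj]
      ring

/-- Connectivity inside a set of vertices, via walks in the grid graph. -/
def Conn (P : Set (Fin d → ℤ)) (x y : Fin d → ℤ) : Prop :=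
  ∃ w : (gridGraph d).Walk x y, ∀ z ∈ w.support, z ∈ P

lemma Conn.refl' {P : Set (Fin d → ℤ)} {x : Fin d → ℤ} (hx : x ∈ P) : Conn P x x :=
  ⟨Walk.nil, by simp [hx]⟩

lemma Conn.symm' {P : Set (Fin d → ℤ)} {x y : Fin d → ℤ} (h : Conn P x y) : Conn P y x := by
  obtain ⟨w, hw⟩ := h
  exact ⟨w.reverse, fun z hz => hw z (by rwa [Walk.support_reverse, List.mem_reverse] at hz)⟩

lemma Conn.trans' {P : Set (Fin d → ℤ)} {x y z : Fin d → ℤ} (h1 : Conn P x y)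
    (h2 : Conn P y z) : Conn P x z := by
  obtain ⟨w1, hw1⟩ := h1
  obtain ⟨w2, hw2⟩ := h2
  refine ⟨w1.append w2, fun t ht => ?_⟩
  rcases (Walk.mem_support_append_iff w1 w2).mp ht with h | h
  · exact hw1 t h
  · exact hw2 t h

lemma Conn.mono {P Q : Set (Fin d → ℤ)} (hPQ : P ⊆ Q) {x y : Fin d → ℤ}
    (h : Conn P x y) : Conn Q x y := by
  obtain ⟨w, hw⟩ := h
  exact ⟨w, fun z hz => hPQ (hw z hz)⟩

lemma Conn.ofAdj {P : Set (Fin d → ℤ)} {x y : Fin d → ℤ}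
    (h : (gridGraph d).Adj x y) (hx : x ∈ P) (hy : y ∈ P) : Conn P x y := by
  refine ⟨Walk.cons h Walk.nil, fun z hz => ?_⟩
  simp only [Walk.support_cons, Walk.support_nil, List.mem_cons, List.mem_singleton,
    List.not_mem_nil, or_false] at hz
  rcases hz with rfl | rfl
  · exact hx
  · exact hy

lemma Conn.mem_left {P : Set (Fin d → ℤ)} {x y : Fin d → ℤ} (h : Conn P x y) : x ∈ P := by
  obtain ⟨w, hw⟩ := h
  exact hw x w.start_mem_support

/-- The radius-3 annulus around `K`. -/
def Ann (K : Set (Fin d → ℤ)) : Set (Fin d → ℤ) :=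
  {x | x ∉ K ∧ ∃ y, y ∈ K ∧ ∃ w : (gridGraph d).Walk x y, w.length ≤ 3}

lemma mem_Ann_of_adj {K : Set (Fin d → ℤ)} {x k : Fin d → ℤ}
    (hx : x ∉ K) (hk : k ∈ K) (h : (gridGraph d).Adj x k) : x ∈ Ann K :=
  ⟨hx, k, hk, Walk.cons h Walk.nil, by simp⟩

lemma mem_Ann_of_adj2 {K : Set (Fin d → ℤ)} {x m k : Fin d → ℤ}
    (hx : x ∉ K) (hxm : (gridGraph d).Adj x m) (hmk : (gridGraph d).Adj m k)
    (hk : k ∈ K) : x ∈ Ann K :=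
  ⟨hx, k, hk, Walk.cons hxm (Walk.cons hmk Walk.nil), by simp⟩

lemma conn_iff_adj {K : Set (Fin d → ℤ)} (u₀ : Fin d → ℤ) {p q : Fin d → ℤ}
    (hp : p ∈ Ann K) (hq : q ∈ Ann K) (h : (gridGraph d).Adj p q) :
    (Conn (Ann K) u₀ p ↔ Conn (Ann K) u₀ q) :=
  ⟨fun hc => hc.trans' (Conn.ofAdj h hp hq), fun hc => hc.trans' (Conn.ofAdj h.symm hq hp)⟩

end ThreeToastAux3

namespace ThreeToastAux4
open SimpleGraph Relation ThreeToastAux ThreeToastAux2 ThreeToastAux3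
variable {d : ℕ}

open Classical in
lemma if_iff_congr {P Q : Prop} (h : P ↔ Q) :
    (if P then (1:ℤ) else 0) = if Q then 1 else 0 := by
  by_cases hp : P
  · rw [if_pos hp, if_pos (h.mp hp)]
  · rw [if_neg hp, if_neg fun hq => hp (h.mpr hq)]

lemma sqid (K : Set (Fin d → ℤ)) (u₀ : Fin d → ℤ) :
    ∀ (z : Fin d → ℤ) (a b : Stp d), a.1 ≠ b.1 →
      ff K (Conn (Ann K) u₀) z (z + vec a)
        + ff K (Conn (Ann K) u₀) (z + vec a) (z + vec a + vec b)
      = ff K (Conn (Ann K) u₀) z (z + vec b)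
        + ff K (Conn (Ann K) u₀) (z + vec b) (z + vec b + vec a) := by
  intro z a b _
  set c := Conn (Ann K) u₀ with hcdef
  set m := z + vec a with hm
  set m' := z + vec b with hm'
  have hteq : z + vec b + vec a = z + vec a + vec b := by abel
  set t := z + vec a + vec b with ht
  rw [hteq]
  have hzm : (gridGraph d).Adj z m := adj_add_vec z a
  have hzm' : (gridGraph d).Adj z m' := adj_add_vec z b
  have hmt : (gridGraph d).Adj m t := by rw [ht, hm]; exact adj_add_vec (z + vec a) b
  have hm't : (gridGraph d).Adj m' t := by
    have h2 := adj_add_vec (z + vec b) a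
    rw [hteq] at h2
    exact h2
  by_cases hz : z ∈ K
  · by_cases hmK : m ∈ K
    · by_cases hm'K : m' ∈ K
      · by_cases htK : t ∈ K
        · rw [ffBB c hz hmK, ffBB c hmK htK, ffBB c hz hm'K, ffBB c hm'K htK]
        · rw [ffBB c hz hmK, ffBW c hmK htK, ffBB c hz hm'K, ffBW c hm'K htK]
      · by_cases htK : t ∈ K
        · rw [ffBB c hz hmK, ffBB c hmK htK, ffBW c hz hm'K, ffWB c hm'K htK]
          ring
        · -- BBWW : need c t ↔ c m'
          rw [ffBB c hz hmK, ffBW c hmK htK, ffBW c hz hm'K, ffWW c hm'K htK]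
          have htA : t ∈ Ann K := mem_Ann_of_adj htK hmK hmt.symm
          have hm'A : m' ∈ Ann K := mem_Ann_of_adj hm'K hz hzm'.symm
          have hiff := conn_iff_adj u₀ hm'A htA hm't
          rw [if_iff_congr hiff]
          ring
    · by_cases hm'K : m' ∈ K
      · by_cases htK : t ∈ K
        · rw [ffBW c hz hmK, ffWB c hmK htK, ffBB c hz hm'K, ffBB c hm'K htK]
          ring
        · -- BWBW : need c m ↔ c t
          rw [ffBW c hz hmK, ffWW c hmK htK, ffBB c hz hm'K, ffBW c hm'K htK]
          have hmA : m ∈ Ann K := mem_Ann_of_adj hmK hz hzm.symm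
          have htA : t ∈ Ann K := mem_Ann_of_adj htK hm'K hm't.symm
          have hiff := conn_iff_adj u₀ hmA htA hmt
          rw [if_iff_congr hiff]
          ring
      · by_cases htK : t ∈ K
        · rw [ffBW c hz hmK, ffWB c hmK htK, ffBW c hz hm'K, ffWB c hm'K htK]
          ring
        · -- BWWW : need c m ↔ c m'
          rw [ffBW c hz hmK, ffWW c hmK htK, ffBW c hz hm'K, ffWW c hm'K htK]
          have hmA : m ∈ Ann K := mem_Ann_of_adj hmK hz hzm.symm
          have hm'A : m' ∈ Ann K := mem_Ann_of_adj hm'K hz hzm'.symm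
          have htA : t ∈ Ann K := mem_Ann_of_adj2 htK hmt.symm hzm.symm hz
          have hiff := (conn_iff_adj u₀ hmA htA hmt).trans
            (conn_iff_adj u₀ htA hm'A hm't.symm)
          rw [if_iff_congr hiff]
  · by_cases hmK : m ∈ K
    · by_cases hm'K : m' ∈ K
      · by_cases htK : t ∈ K
        · rw [ffWB c hz hmK, ffBB c hmK htK, ffWB c hz hm'K, ffBB c hm'K htK]
        · rw [ffWB c hz hmK, ffBW c hmK htK, ffWB c hz hm'K, ffBW c hm'K htK]
      · by_cases htK : t ∈ K
        · -- WBWB : need c z ↔ c m'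
          rw [ffWB c hz hmK, ffBB c hmK htK, ffWW c hz hm'K, ffWB c hm'K htK]
          have hzA : z ∈ Ann K := mem_Ann_of_adj hz hmK hzm
          have hm'A : m' ∈ Ann K := mem_Ann_of_adj hm'K htK hm't
          have hiff := conn_iff_adj u₀ hzA hm'A hzm'
          rw [if_iff_congr hiff]
          ring
        · -- WBWW : need c z ↔ c t
          rw [ffWB c hz hmK, ffBW c hmK htK, ffWW c hz hm'K, ffWW c hm'K htK]
          have hzA : z ∈ Ann K := mem_Ann_of_adj hz hmK hzm
          have htA : t ∈ Ann K := mem_Ann_of_adj htK hmK hmt.symm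
          have hm'A : m' ∈ Ann K := mem_Ann_of_adj2 hm'K hzm'.symm hzm hmK
          have hiff := (conn_iff_adj u₀ hzA hm'A hzm').trans
            (conn_iff_adj u₀ hm'A htA hm't)
          rw [if_iff_congr hiff]
          ring
    · by_cases hm'K : m' ∈ K
      · by_cases htK : t ∈ K
        · -- WWBB : need c m ↔ c z
          rw [ffWW c hz hmK, ffWB c hmK htK, ffWB c hz hm'K, ffBB c hm'K htK]
          have hmA : m ∈ Ann K := mem_Ann_of_adj hmK htK hmt
          have hzA : z ∈ Ann K := mem_Ann_of_adj hz hm'K hzm'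
          have hiff := conn_iff_adj u₀ hzA hmA hzm
          rw [← if_iff_congr hiff]
          ring
        · -- WWBW : need c z ↔ c t
          rw [ffWW c hz hmK, ffWW c hmK htK, ffWB c hz hm'K, ffBW c hm'K htK]
          have hzA : z ∈ Ann K := mem_Ann_of_adj hz hm'K hzm'
          have htA : t ∈ Ann K := mem_Ann_of_adj htK hm'K hm't.symm
          have hmA : m ∈ Ann K := mem_Ann_of_adj2 hmK hzm.symm hzm' hm'K
          have hiff := (conn_iff_adj u₀ hzA hmA hzm).trans
            (conn_iff_adj u₀ hmA htA hmt)
          rw [if_iff_congr hiff]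
          ring
      · by_cases htK : t ∈ K
        · -- WWWB : need c m ↔ c m'
          rw [ffWW c hz hmK, ffWB c hmK htK, ffWW c hz hm'K, ffWB c hm'K htK]
          have hmA : m ∈ Ann K := mem_Ann_of_adj hmK htK hmt
          have hm'A : m' ∈ Ann K := mem_Ann_of_adj hm'K htK hm't
          have hzA : z ∈ Ann K := mem_Ann_of_adj2 hz hzm hmt htK
          have hiff := (conn_iff_adj u₀ hmA hzA hzm.symm).trans
            (conn_iff_adj u₀ hzA hm'A hzm')
          rw [if_iff_congr hiff]
        · rw [ffWW c hz hmK, ffWW c hmK htK, ffWW c hz hm'K, ffWW c hm'K htK]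

lemma word_of_walk : ∀ {x y : Fin d → ℤ} (w : (gridGraph d).Walk x y),
    ∃ ww : List (Stp d), endp x ww = y ∧ ∀ z ∈ vlist x ww, z ∈ w.support := by
  intro x y w
  induction w with
  | nil => exact ⟨[], by simp, by simp⟩
  | @cons x y' y h p ih =>
    obtain ⟨s, hs⟩ := exists_step_of_adj h
    obtain ⟨ww, hend, hmem⟩ := ih
    refine ⟨s :: ww, ?_, ?_⟩
    · rw [endp_cons, ← hs, hend]
    · intro z hz
      rw [vlist_cons, List.mem_cons] at hz
      rcases hz with rfl | hz
      · exact Walk.start_mem_support _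
      · rw [← hs] at hz
        rw [Walk.support_cons]
        exact List.mem_cons_of_mem _ (hmem z hz)

lemma J_white (K : Set (Fin d → ℤ)) (c : (Fin d → ℤ) → Prop) :
    ∀ (w : List (Stp d)) (u : Fin d → ℤ), (∀ z ∈ vlist u w, z ∉ K) → J K c u w = 0
  | [], u, _ => rfl
  | s :: t, u, h => by
    rw [J_cons, ffWW c (h u (mem_vlist_self u _)) (h (u + vec s)
      (by rw [vlist_cons]; exact List.mem_cons_of_mem _ (mem_vlist_self _ _))),
      J_white K c t (u + vec s) fun z hz =>
        h z (by rw [vlist_cons]; exact List.mem_cons_of_mem _ hz)]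
    ring

lemma J_black (K : Set (Fin d → ℤ)) (c : (Fin d → ℤ) → Prop) :
    ∀ (w : List (Stp d)) (u : Fin d → ℤ), (∀ z ∈ vlist u w, z ∈ K) → J K c u w = 0
  | [], u, _ => rfl
  | s :: t, u, h => by
    rw [J_cons, ffBB c (h u (mem_vlist_self u _)) (h (u + vec s)
      (by rw [vlist_cons]; exact List.mem_cons_of_mem _ (mem_vlist_self _ _))),
      J_black K c t (u + vec s) fun z hz =>
        h z (by rw [vlist_cons]; exact List.mem_cons_of_mem _ hz)]
    ring

/-- The core lemma: if `u, v` lie outside `K` but adjacent to it, are joined by a walk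
avoiding `K`, and their `K`-neighbours are joined by a walk inside `K`, then `u` and `v`
are connected within the radius-3 annulus of `K`. -/
theorem core_conn {K : Set (Fin d → ℤ)} {u v ku kv : Fin d → ℤ}
    (hu : u ∉ K) (hku : ku ∈ K) (hadju : (gridGraph d).Adj u ku)
    (hv : v ∉ K) (hkv : kv ∈ K) (hadjv : (gridGraph d).Adj v kv)
    (P : (gridGraph d).Walk u v) (hP : ∀ z ∈ P.support, z ∉ K)
    (Q : (gridGraph d).Walk kv ku) (hQ : ∀ z ∈ Q.support, z ∈ K) :
    Conn (Ann K) u v := by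
  classical
  set c := Conn (Ann K) u with hcdef
  obtain ⟨wP, hPend, hPmem⟩ := word_of_walk P
  obtain ⟨wQ, hQend, hQmem⟩ := word_of_walk Q
  obtain ⟨s1, hs1⟩ := exists_step_of_adj hadjv
  obtain ⟨s2, hs2⟩ := exists_step_of_adj hadju.symm
  set W : List (Stp d) := wP ++ (s1 :: (wQ ++ [s2])) with hW
  have hendW : endp u W = u := by
    rw [hW, endp_append, hPend, endp_cons, ← hs1, endp_append, hQend, endp_cons, ← hs2]
    simp
  have hsum : (W.map vec).sum = 0 := by
    have h2 : u + (W.map vec).sum = u + 0 := by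
      rw [add_zero]
      exact hendW
    exact add_left_cancel h2
  have hJW : J K c u W = J K c u [] := J_moves (sqid K u) (reduce_to_nil W hsum) u
  have hcompute : J K c u W = (if c v then (1:ℤ) else 0) - 1 := by
    rw [hW, J_append, hPend, J_cons, ← hs1, J_append, hQend, J_cons]
    have hP0 : J K c u wP = 0 := J_white K c wP u fun z hz => hP z (hPmem z hz)
    have hQ0 : J K c kv wQ = 0 := J_black K c wQ kv fun z hz => hQ z (hQmem z hz)
    have hf1 : ff K c v kv = if c v then (1:ℤ) else 0 := ffWB c hv hkv
    have hf2 : ff K c ku (ku + vec s2) = - if c u then (1:ℤ) else 0 := by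
      rw [← hs2]; exact ffBW c hku hu
    have hcu : c u := Conn.refl' (mem_Ann_of_adj hu hku hadju)
    rw [hP0, hQ0, hf1, hf2, ← hs2]
    simp [hcu, sub_eq_add_neg]
  rw [hJW] at hcompute
  simp only [J_nil] at hcompute
  by_cases hcv : c v
  · exact hcv
  · rw [if_neg hcv] at hcompute; omega

end ThreeToastAux4

namespace ThreeToastAux5
open SimpleGraph Relation ThreeToastAux ThreeToastAux2 ThreeToastAux3 ThreeToastAux4
variable {d : ℕ}

lemma add_vec_self (p : Fin d → ℤ) (j : Fin d) (bb : Bool) :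
    (p + vec ((j, bb) : Stp d)) j = p j + cond bb 1 (-1) := by
  rw [Pi.add_apply, vec_apply]
  simp

lemma add_vec_other (p : Fin d → ℤ) (j l : Fin d) (bb : Bool) (hl : l ≠ j) :
    (p + vec ((j, bb) : Stp d)) l = p l := by
  rw [Pi.add_apply, vec_apply]
  simp [hl]

lemma segment_conn (P : Set (Fin d → ℤ)) (j : Fin d) :
    ∀ (n : ℕ) (p q : Fin d → ℤ), (∀ l, l ≠ j → q l = p l) → (q j - p j).natAbs = n →
    (∀ z : Fin d → ℤ, (∀ l, l ≠ j → z l = p l) →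
      ((p j ≤ z j ∧ z j ≤ q j) ∨ (q j ≤ z j ∧ z j ≤ p j)) → z ∈ P) →
    Conn P p q := by
  intro n
  induction n with
  | zero =>
    intro p q hq h0 hP
    have hj : q j = p j := by omega
    have : q = p := funext fun l => by
      by_cases hl : l = j
      · subst hl; exact hj
      · exact hq l hl
    rw [this]
    exact Conn.refl' (hP p (fun _ _ => rfl) (Or.inl ⟨le_refl _, by omega⟩))
  | succ n ih =>
    intro p q hq hn hP
    by_cases hgt : p j < q j
    · set p' := p + vec ((j, true) : Stp d) with hp'def
      have hp'j : p' j = p j + 1 := add_vec_self p j true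
      have hp'l : ∀ l, l ≠ j → p' l = p l := fun l hl => add_vec_other p j l true hl
      have hpP : p ∈ P := hP p (fun _ _ => rfl) (Or.inl ⟨le_refl _, by omega⟩)
      have hp'P : p' ∈ P := hP p' hp'l (Or.inl ⟨by omega, by omega⟩)
      refine (Conn.ofAdj (adj_add_vec p ((j, true) : Stp d)) hpP hp'P).trans' ?_
      refine ih p' q (fun l hl => (hq l hl).trans (hp'l l hl).symm) (by omega) ?_
      intro z hzl hzb
      refine hP z (fun l hl => (hzl l hl).trans (hp'l l hl)) ?_
      rcases hzb with ⟨h1, h2⟩ | ⟨h1, h2⟩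
      · exact Or.inl ⟨by omega, h2⟩
      · exact Or.inl ⟨by omega, by omega⟩
    · by_cases heq : p j = q j
      · exfalso; omega
      · have hp'j : (p + vec ((j, false) : Stp d)) j = p j - 1 := by
          have h : (p + vec ((j, false) : Stp d)) j = p j + (-1) := add_vec_self p j false
          omega
        have hp'l : ∀ l, l ≠ j → (p + vec ((j, false) : Stp d)) l = p l :=
          fun l hl => add_vec_other p j l false hl
        have hpP : p ∈ P := hP p (fun _ _ => rfl) (Or.inr ⟨by omega, le_refl _⟩)
        have hp'P : (p + vec ((j, false) : Stp d)) ∈ P :=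
          hP _ hp'l (Or.inr ⟨by omega, by omega⟩)
        refine (Conn.ofAdj (adj_add_vec p ((j, false) : Stp d)) hpP hp'P).trans' ?_
        refine ih (p + vec ((j, false) : Stp d)) q
          (fun l hl => (hq l hl).trans (hp'l l hl).symm) (by omega) ?_
        intro z hzl hzb
        refine hP z (fun l hl => (hzl l hl).trans (hp'l l hl)) ?_
        rcases hzb with ⟨h1, h2⟩ | ⟨h1, h2⟩
        · exact Or.inr ⟨by omega, by omega⟩
        · exact Or.inr ⟨h1, by omega⟩

lemma conn_of_guard_coord (P : Set (Fin d → ℤ)) (i₀ : Fin d) (v₀ : ℤ)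
    (hP : ∀ z : Fin d → ℤ, z i₀ = v₀ → z ∈ P) :
    ∀ (n : ℕ) (p q : Fin d → ℤ),
      (Finset.univ.filter fun l => p l ≠ q l).card ≤ n →
      p i₀ = v₀ → q i₀ = v₀ → Conn P p q := by
  intro n
  induction n with
  | zero =>
    intro p q hcard hp hq
    have : p = q := by
      funext l
      by_contra hl
      have : l ∈ Finset.univ.filter fun l => p l ≠ q l := by simp [hl]
      have := Finset.card_pos.mpr ⟨l, this⟩
      omega
    rw [← this]
    exact Conn.refl' (hP p hp)
  | succ n ih =>
    intro p q hcard hp hq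
    by_cases hpq : p = q
    · rw [← hpq]; exact Conn.refl' (hP p hp)
    · have hex : ∃ j, p j ≠ q j := by
        by_contra hc
        push_neg at hc
        exact hpq (funext hc)
      obtain ⟨j, hj⟩ := hex
      have hji : j ≠ i₀ := fun h => hj (by rw [h, hp, hq])
      set p' := Function.update p j (q j) with hp'def
      have hp'j : p' j = q j := Function.update_self j (q j) p
      have hp'l : ∀ l, l ≠ j → p' l = p l := fun l hl => Function.update_of_ne hl (q j) p
      have hseg : Conn P p p' := by
        refine segment_conn P j ((p' j - p j).natAbs) p p' hp'l rfl ?_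
        intro z hzl _
        exact hP z (by rw [hzl i₀ (Ne.symm hji), hp])
      refine hseg.trans' (ih p' q ?_ (by rw [hp'l i₀ (Ne.symm hji), hp]) hq)
      have hsub : (Finset.univ.filter fun l => p' l ≠ q l) ⊆
          (Finset.univ.filter fun l => p l ≠ q l).erase j := by
        intro l hl
        simp only [Finset.mem_filter, Finset.mem_univ, true_and] at hl
        have hlj : l ≠ j := fun h => hl (by rw [h, hp'j])
        rw [Finset.mem_erase]
        refine ⟨hlj, ?_⟩
        simp only [Finset.mem_filter, Finset.mem_univ, true_and]
        rw [← hp'l l hlj]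
        exact hl
      have hjmem : j ∈ Finset.univ.filter fun l => p l ≠ q l := by simp [hj]
      have := Finset.card_le_card hsub
      rw [Finset.card_erase_of_mem hjmem] at this
      omega

end ThreeToastAux5

namespace ThreeToastAux6
open SimpleGraph ThreeToastAux ThreeToastAux2 ThreeToastAux3 ThreeToastAux4 ThreeToastAux5
variable {d : ℕ}

lemma finite_box (B : ℤ) : {v : Fin d → ℤ | ∀ i, |v i| ≤ B}.Finite := by
  have hsub : {v : Fin d → ℤ | ∀ i, |v i| ≤ B} ⊆
      Set.pi Set.univ fun _ : Fin d => Set.Icc (-B) B := by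
    intro v hv i _
    rcases abs_le.mp (hv i) with ⟨h1, h2⟩
    exact ⟨h1, h2⟩
  exact (Set.Finite.pi fun _ => Set.finite_Icc _ _).subset hsub

lemma far_to_corner (B : ℤ) (M : Set (Fin d → ℤ)) (hB : 0 ≤ B)
    (hguard : ∀ (z : Fin d → ℤ) (i : Fin d), B < |z i| → z ∉ M)
    (x : Fin d → ℤ) (i₀ : Fin d) (hx : B < |x i₀|) (hd : 2 ≤ d) :
    Conn Mᶜ x (fun _ => B + 1) := by
  have habs : ∀ (z : Fin d → ℤ) (i : Fin d), B + 1 ≤ z i → z ∈ Mᶜ := by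
    intro z i h
    exact hguard z i (lt_of_lt_of_le (by omega) (le_abs_self _))
  have habs' : ∀ (z : Fin d → ℤ) (i : Fin d), z i ≤ -(B + 1) → z ∈ Mᶜ := by
    intro z i h
    exact hguard z i (lt_of_lt_of_le (show B < -(z i) by omega) (neg_le_abs _))
  by_cases hpos : 0 < x i₀
  · have hxi : B < x i₀ := by rwa [abs_of_pos hpos] at hx
    have hupd : (Function.update x i₀ (B + 1)) i₀ = B + 1 := Function.update_self _ _ _
    have hseg : Conn Mᶜ x (Function.update x i₀ (B + 1)) := by
      refine segment_conn Mᶜ i₀ _ x _ (fun l hl => Function.update_of_ne hl _ _) rfl ?_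
      intro z hzl hzb
      rcases hzb with ⟨h1, h2⟩ | ⟨h1, h2⟩
      · exact habs z i₀ (by omega)
      · exact habs z i₀ (by omega)
    refine hseg.trans' ?_
    exact conn_of_guard_coord Mᶜ i₀ (B + 1) (fun z hz => habs z i₀ (by omega)) _
      (Function.update x i₀ (B + 1)) (fun _ => B + 1) le_rfl hupd rfl
  · have hxi : x i₀ ≤ -(B+1) := by
      have h0 : x i₀ ≤ 0 := by omega
      rw [abs_of_nonpos h0] at hx
      omega
    have h1d : (1 : ℕ) < d := by omega
    have h0d : (0 : ℕ) < d := by omega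
    have hi12 : (⟨0, h0d⟩ : Fin d) ≠ ⟨1, h1d⟩ := by
      intro h
      have := congrArg Fin.val h
      simp at this
    set j : Fin d := if i₀ = ⟨0, h0d⟩ then ⟨1, h1d⟩ else ⟨0, h0d⟩ with hj
    have hji : j ≠ i₀ := by
      by_cases h : i₀ = (⟨0, h0d⟩ : Fin d)
      · rw [hj, if_pos h, h]; exact hi12.symm
      · rw [hj, if_neg h]; exact fun hh => h hh.symm
    have hupd1 : (Function.update x i₀ (-(B+1))) i₀ = -(B+1) := Function.update_self _ _ _
    have hc1 : Conn Mᶜ x (Function.update x i₀ (-(B+1))) := by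
      refine segment_conn Mᶜ i₀ _ x _ (fun l hl => Function.update_of_ne hl _ _) rfl ?_
      intro z hzl hzb
      rcases hzb with ⟨h1, h2⟩ | ⟨h1, h2⟩
      · exact habs' z i₀ (by omega)
      · exact habs' z i₀ (by omega)
    have hupd2 : (Function.update (Function.update x i₀ (-(B+1))) j (B+1)) j = B + 1 :=
      Function.update_self _ _ _
    have hc2 : Conn Mᶜ (Function.update x i₀ (-(B+1)))
        (Function.update (Function.update x i₀ (-(B+1))) j (B+1)) := by
      refine segment_conn Mᶜ j _ _ _ (fun l hl => Function.update_of_ne hl _ _) rfl ?_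
      intro z hzl _
      have hz0 : z i₀ = -(B+1) := by rw [hzl i₀ (Ne.symm hji), hupd1]
      exact habs' z i₀ (by omega)
    have hupd3 : (Function.update
        (Function.update (Function.update x i₀ (-(B+1))) j (B+1)) i₀ (B+1)) i₀ = B + 1 :=
      Function.update_self _ _ _
    have hc3 : Conn Mᶜ (Function.update (Function.update x i₀ (-(B+1))) j (B+1))
        (Function.update
          (Function.update (Function.update x i₀ (-(B+1))) j (B+1)) i₀ (B+1)) := by
      refine segment_conn Mᶜ i₀ _ _ _ (fun l hl => Function.update_of_ne hl _ _) rfl ?_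
      intro z hzl _
      have hzj : z j = B + 1 := by rw [hzl j hji, hupd2]
      exact habs z j (by omega)
    refine ((hc1.trans' hc2).trans' hc3).trans' ?_
    exact conn_of_guard_coord Mᶜ i₀ (B + 1) (fun z hz => habs z i₀ (by omega)) _
      _ (fun _ => B + 1) le_rfl hupd3 rfl

lemma conn_of_induced_reachable {P : Set (Fin d → ℤ)} {a b : ↥P}
    (h : ((gridGraph d).induce P).Reachable a b) : Conn P a.1 b.1 := by
  obtain ⟨w⟩ := h
  induction w with
  | nil => exact Conn.refl' (by exact Subtype.coe_prop _)
  | @cons a c b hadj p ih =>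
    have hadj' : (gridGraph d).Adj a.1 c.1 := hadj
    exact (Conn.ofAdj hadj' a.2 c.2).trans' ih

theorem compl_conn (hd : 2 ≤ d) {M : Set (Fin d → ℤ)} (hMfin : M.Finite)
    (hnh : HasNoHoles (gridGraph d) M) {x y : Fin d → ℤ} (hx : x ∉ M) (hy : y ∉ M) :
    Conn Mᶜ x y := by
  classical
  set B : ℤ := ((hMfin.toFinset.sup fun z => Finset.univ.sup fun i => (z i).natAbs : ℕ) : ℤ)
    with hBdef
  have hB0 : 0 ≤ B := Int.natCast_nonneg _
  have hbound : ∀ z ∈ M, ∀ i, |z i| ≤ B := by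
    intro z hz i
    have ha : (z i).natAbs ≤ Finset.univ.sup fun i => (z i).natAbs := by
      simpa using Finset.le_sup (f := fun i => (z i).natAbs) (Finset.mem_univ i)
    have hb : (Finset.univ.sup fun i => (z i).natAbs) ≤
        hMfin.toFinset.sup fun z => Finset.univ.sup fun i => (z i).natAbs := by
      simpa using Finset.le_sup (f := fun z => Finset.univ.sup fun i => (z i).natAbs)
        (hMfin.mem_toFinset.mpr hz)
    have h1 := le_trans ha hb
    rw [Int.abs_eq_natAbs, hBdef]
    exact_mod_cast h1
  have hguard : ∀ (z : Fin d → ℤ) (i : Fin d), B < |z i| → z ∉ M := by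
    intro z i hzi hzM
    exact absurd (hbound z hzM i) (not_le.mpr hzi)
  have hfar : ∀ w : Fin d → ℤ, w ∉ M → Conn Mᶜ w (fun _ => B + 1) := by
    intro w hw
    have hinf : (((gridGraph d).induce Mᶜ).connectedComponentMk ⟨w, hw⟩).supp.Infinite :=
      hnh _
    have himg : (Subtype.val '' (((gridGraph d).induce Mᶜ).connectedComponentMk
        ⟨w, hw⟩).supp).Infinite :=
      hinf.image Subtype.val_injective.injOn
    obtain ⟨z, hzmem, hzbox⟩ := himg.exists_notMem_finite (finite_box B)
    obtain ⟨z', hz'supp, rfl⟩ := hzmem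
    have hmk := (SimpleGraph.ConnectedComponent.mem_supp_iff _ _).mp hz'supp
    have hreach : ((gridGraph d).induce Mᶜ).Reachable ⟨w, hw⟩ z' :=
      (SimpleGraph.ConnectedComponent.exact hmk).symm
    have h1 : Conn Mᶜ w z'.1 := conn_of_induced_reachable hreach
    have hfarz : ∃ i, B < |z'.1 i| := by
      by_contra hc
      push_neg at hc
      exact hzbox fun i => hc i
    obtain ⟨i₀, hi₀⟩ := hfarz
    exact h1.trans' (far_to_corner B M hB0 hguard z'.1 i₀ hi₀ hd)
  exact (hfar x hx).trans' (hfar y hy).symm'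

end ThreeToastAux6

namespace ThreeToastAux7
open SimpleGraph ThreeToastAux ThreeToastAux2 ThreeToastAux3 ThreeToastAux4 ThreeToastAux5 ThreeToastAux6
variable {d : ℕ}

lemma ann_sub_nbhdK {K : Set (Fin d → ℤ)} : Ann K ⊆ SetNbhdK (gridGraph d) 3 K := by
  rintro x ⟨hx, k, hk, w, hlen⟩
  exact ⟨k, hk, ⟨w⟩, le_trans (SimpleGraph.dist_le w) hlen⟩

lemma mem_ann_of_nbhdK {K : Set (Fin d → ℤ)} {x : Fin d → ℤ}
    (h : x ∈ SetNbhdK (gridGraph d) 3 K) (hx : x ∉ K) : x ∈ Ann K := by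
  obtain ⟨k, hk, hreach, hdist⟩ := h
  obtain ⟨w, hw⟩ := hreach.exists_walk_length_eq_dist
  exact ⟨hx, k, hk, w, by omega⟩

lemma subset_nbhdK {V : Type*} (G : SimpleGraph V) (K : Set V) (k : ℕ) :
    K ⊆ SetNbhdK G k K := by
  intro x hx
  exact ⟨x, hx, Reachable.refl x, by rw [SimpleGraph.dist_self]; omega⟩

lemma nbhd_subset_nbhdK {V : Type*} (G : SimpleGraph V) (K : Set V) (k : ℕ) (hk : 1 ≤ k) :
    SetNbhd G K ⊆ SetNbhdK G k K := by
  rintro x ⟨y, hy, hadj⟩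
  refine ⟨y, hy, hadj.reachable, ?_⟩
  have := SimpleGraph.dist_le (Walk.cons hadj Walk.nil)
  simp only [Walk.length_cons, Walk.length_nil] at this
  omega

lemma mem_nbhdK_of_adj {V : Type*} {G : SimpleGraph V} {K : Set V} {x y : V} (k : ℕ)
    (hk : 1 ≤ k) (hy : y ∈ K) (hadj : G.Adj x y) : x ∈ SetNbhdK G k K :=
  nbhd_subset_nbhdK G K k hk ⟨y, hy, hadj⟩

lemma ann_to_boundary {K : Set (Fin d → ℤ)} :
    ∀ {p k : Fin d → ℤ} (w : (gridGraph d).Walk p k), w.length ≤ 3 → p ∉ K → k ∈ K →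
    ∃ p' k', p' ∉ K ∧ k' ∈ K ∧ (gridGraph d).Adj p' k' ∧ Conn (Ann K) p p' := by
  intro p k w
  induction w with
  | nil => intro _ hp hk; exact absurd hk hp
  | @cons p r k hadj w' ih =>
    intro hlen hp hk
    have hlen' : w'.length ≤ 3 := by
      rw [Walk.length_cons] at hlen; omega
    by_cases hr : r ∈ K
    · exact ⟨p, r, hp, hr, hadj,
        Conn.refl' ⟨hp, k, hk, Walk.cons hadj w', hlen⟩⟩
    · obtain ⟨p', k', h1, h2, h3, h4⟩ := ih hlen' hr hk
      refine ⟨p', k', h1, h2, h3, ?_⟩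
      have hpA : p ∈ Ann K := ⟨hp, k, hk, Walk.cons hadj w', hlen⟩
      have hrA : r ∈ Ann K := ⟨hr, k, hk, w', by omega⟩
      exact (Conn.ofAdj hadj hpA hrA).trans' h4

/-- Connectivity of the radius-3 annulus of a finite, connected, hole-free set. -/
theorem ann_conn (hd : 2 ≤ d) {K : Set (Fin d → ℤ)} (hKfin : K.Finite)
    (hKconn : ((gridGraph d).induce K).Connected) (hnh : HasNoHoles (gridGraph d) K)
    {x y : Fin d → ℤ} (hx : x ∈ Ann K) (hy : y ∈ Ann K) : Conn (Ann K) x y := by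
  obtain ⟨hxK, kx, hkx, wx, hlx⟩ := hx
  obtain ⟨hyK, ky, hky, wy, hly⟩ := hy
  obtain ⟨x', kx', hx'K, hkx'K, hadjx, hconnx⟩ := ann_to_boundary wx hlx hxK hkx
  obtain ⟨y', ky', hy'K, hky'K, hadjy, hconny⟩ := ann_to_boundary wy hly hyK hky
  -- walk between x' and y' avoiding K
  obtain ⟨P, hPsupp⟩ := compl_conn hd hKfin hnh hx'K hy'K
  -- walk between ky' and kx' inside K
  have hreach : ((gridGraph d).induce K).Reachable ⟨ky', hky'K⟩ ⟨kx', hkx'K⟩ :=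
    hKconn.preconnected _ _
  obtain ⟨Q, hQsupp⟩ := conn_of_induced_reachable hreach
  have hcore : Conn (Ann K) x' y' :=
    core_conn hx'K hkx'K hadjx hy'K hky'K hadjy P (fun z hz => hPsupp z hz) Q hQsupp
  exact (hconnx.trans' hcore).trans' hconny.symm'

lemma aux_exit {M K₀ : Set (Fin d → ℤ)} :
    ∀ {z y : Fin d → ℤ} (w : (gridGraph d).Walk z y), z ∈ M →
      (∀ t ∈ w.support, t ∈ K₀) → y ∉ M →
    ∃ q, q ∉ M ∧ (∃ m ∈ M, (gridGraph d).Adj q m) ∧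
      ∃ w₂ : (gridGraph d).Walk q y, (∀ t ∈ w₂.support, t ∈ K₀) ∧ w₂.length < w.length := by
  intro z y w
  induction w with
  | nil => intro hz _ hy; exact absurd hz hy
  | @cons z r y hadj w' ih =>
    intro hz hsupp hy
    by_cases hr : r ∈ M
    · obtain ⟨q, h1, h2, w₂, h3, h4⟩ := ih hr
        (fun t ht => hsupp t (by rw [Walk.support_cons]; exact List.mem_cons_of_mem _ ht)) hy
      exact ⟨q, h1, h2, w₂, h3, by rw [Walk.length_cons]; omega⟩
    · refine ⟨r, hr, ⟨z, hz, hadj.symm⟩, w',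
        fun t ht => hsupp t (by rw [Walk.support_cons]; exact List.mem_cons_of_mem _ ht), ?_⟩
      rw [Walk.length_cons]; omega

lemma induced_reachable_of_conn {P : Set (Fin d → ℤ)} :
    ∀ {x y : Fin d → ℤ} (w : (gridGraph d).Walk x y), (∀ z ∈ w.support, z ∈ P) →
    ∀ (hx : x ∈ P) (hy : y ∈ P), ((gridGraph d).induce P).Reachable ⟨x, hx⟩ ⟨y, hy⟩ := by
  intro x y w
  induction w with
  | nil => intro _ hx hy; exact Reachable.refl _
  | @cons x r y hadj w' ih =>
    intro hsupp hx hy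
    have hr : r ∈ P := by
      refine hsupp r ?_
      rw [Walk.support_cons]
      exact List.mem_cons_of_mem _ w'.start_mem_support
    have hadj' : ((gridGraph d).induce P).Adj ⟨x, hx⟩ ⟨r, hr⟩ := hadj
    refine (hadj'.reachable).trans (ih ?_ hr hy)
    intro t ht
    refine hsupp t ?_
    rw [Walk.support_cons]
    exact List.mem_cons_of_mem _ ht

end ThreeToastAux7


open SimpleGraph ThreeToastAux ThreeToastAux2 ThreeToastAux3 ThreeToastAux4 ThreeToastAux5
  ThreeToastAux6 ThreeToastAux7

/-- combinatorial core of Proposition 2.4: for `d ≥ 2`, a `3`-toast in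
the grid graph on `ℤ^d` all of whose tiles are finite, connected and hole-free is a
connected toast; in particular, for every `L` in the collection, the subgraph induced
on `L` minus the union of the members properly contained in `L` is connected. -/
theorem threeToast_of_grid_isConnectedToast
    (d : ℕ) (hd : 2 ≤ d) (T : Set (Set (Fin d → ℤ)))
    (htiles : ∀ K ∈ T, K.Finite ∧ ((gridGraph d).induce K).Connected ∧
      HasNoHoles (gridGraph d) K)
    (hcover : ∀ x y : Fin d → ℤ, (gridGraph d).Adj x y → ∃ K ∈ T, x ∈ K ∧ y ∈ K)
    (hnest : ∀ K ∈ T, ∀ L ∈ T, K ≠ L →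
      SetNbhdK (gridGraph d) 3 K ∩ L = ∅ ∨
      SetNbhdK (gridGraph d) 3 K ⊆ L ∨
      SetNbhdK (gridGraph d) 3 L ⊆ K) :
    IsConnectedToast (gridGraph d) T := by
  classical
  refine ⟨fun K hK => ⟨(htiles K hK).1, (htiles K hK).2.1⟩, hcover, ?_, ?_⟩
  · intro K hK L hL hne
    have hsubK : K ∪ SetNbhd (gridGraph d) K ⊆ SetNbhdK (gridGraph d) 3 K :=
      Set.union_subset (subset_nbhdK _ _ _) (nbhd_subset_nbhdK _ _ _ (by omega))
    have hsubL : L ∪ SetNbhd (gridGraph d) L ⊆ SetNbhdK (gridGraph d) 3 L :=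
      Set.union_subset (subset_nbhdK _ _ _) (nbhd_subset_nbhdK _ _ _ (by omega))
    rcases hnest K hK L hL hne with h | h | h
    · refine Or.inl (Set.subset_empty_iff.mp ?_)
      rw [← h]
      exact Set.inter_subset_inter_left L hsubK
    · exact Or.inr (Or.inl (hsubK.trans h))
    · exact Or.inr (Or.inr (hsubL.trans h))
  · intro K₀ hK₀
    obtain ⟨hfin, hconn, hnh⟩ := htiles K₀ hK₀
    have hsub3 : ∀ L, L ∈ T → L ⊂ K₀ → SetNbhdK (gridGraph d) 3 L ⊆ K₀ := by
      intro L hLT hLK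
      obtain ⟨hLsub, hLne⟩ := Set.ssubset_iff_subset_ne.mp hLK
      rcases hnest L hLT K₀ hK₀ hLne with h | h | h
      · exfalso
        obtain ⟨⟨x, hxL⟩⟩ := (htiles L hLT).2.1.nonempty
        have hmem : x ∈ SetNbhdK (gridGraph d) 3 L ∩ K₀ :=
          ⟨subset_nbhdK _ _ _ hxL, hLsub hxL⟩
        rw [h] at hmem
        exact hmem
      · exact h
      · exfalso
        have : K₀ ⊆ L := (subset_nbhdK _ _ _).trans h
        exact hLne (Set.Subset.antisymm hLsub this)
    have hFfin : {L | L ∈ T ∧ L ⊂ K₀}.Finite :=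
      hfin.finite_subsets.subset fun L hL =>
        (Set.ssubset_iff_subset_ne.mp hL.2).1
    have hmax : ∀ L ∈ {L | L ∈ T ∧ L ⊂ K₀}, ∃ M, M ∈ {L | L ∈ T ∧ L ⊂ K₀} ∧ L ⊆ M ∧
        ∀ L' ∈ {L | L ∈ T ∧ L ⊂ K₀}, M ⊆ L' → M = L' := by
      intro L hL
      have hsfin : {X | X ∈ {L | L ∈ T ∧ L ⊂ K₀} ∧ L ⊆ X}.Finite :=
        hFfin.subset fun X hX => hX.1
      have hsne : {X | X ∈ {L | L ∈ T ∧ L ⊂ K₀} ∧ L ⊆ X}.Nonempty :=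
        ⟨L, hL, subset_rfl⟩
      obtain ⟨M, hM, hMmax⟩ := Set.Finite.exists_maximalFor id _ hsfin hsne
      refine ⟨M, hM.1, hM.2, ?_⟩
      intro L' hL' hML'
      exact Set.Subset.antisymm hML' (hMmax ⟨hL', hM.2.trans hML'⟩ hML')
    have hAnnS : ∀ M, M ∈ {L | L ∈ T ∧ L ⊂ K₀} →
        (∀ L' ∈ {L | L ∈ T ∧ L ⊂ K₀}, M ⊆ L' → M = L') →
        Ann M ⊆ K₀ \ ⋃₀ {L | L ∈ T ∧ L ⊂ K₀} := by
      intro M hMF hMmax x hx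
      refine ⟨hsub3 M hMF.1 hMF.2 (ann_sub_nbhdK hx), ?_⟩
      rintro ⟨L', hL'F, hxL'⟩
      by_cases heq : M = L'
      · exact hx.1 (heq ▸ hxL')
      · rcases hnest M hMF.1 L' hL'F.1 heq with h | h | h
        · exact Set.eq_empty_iff_forall_notMem.mp h x ⟨ann_sub_nbhdK hx, hxL'⟩
        · exact heq (hMmax L' hL'F fun z hz => h (subset_nbhdK _ _ _ hz))
        · exact hx.1 ((subset_nbhdK _ _ _).trans h hxL')
    have h0d : (0 : ℕ) < d := by omega
    have hSne : (K₀ \ ⋃₀ {L | L ∈ T ∧ L ⊂ K₀}).Nonempty := by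
      obtain ⟨⟨x₀, hx₀⟩⟩ := hconn.nonempty
      obtain ⟨w, hwK₀, hwmax⟩ :=
        Set.exists_max_image K₀ (fun z => z ⟨0, h0d⟩) hfin ⟨x₀, hx₀⟩
      have hwout : w + vec ((⟨0, h0d⟩, true) : Stp d) ∉ K₀ := by
        intro hmem
        have h1 := hwmax _ hmem
        have h2 : (w + vec ((⟨0, h0d⟩, true) : Stp d)) ⟨0, h0d⟩ = w ⟨0, h0d⟩ + 1 :=
          add_vec_self w ⟨0, h0d⟩ true
        omega
      refine ⟨w, hwK₀, ?_⟩
      rintro ⟨L, hLF, hwL⟩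
      exact hwout (hsub3 L hLF.1 hLF.2
        (mem_nbhdK_of_adj 3 (by omega) hwL ((adj_add_vec w _).symm)))
    have CS : ∀ (n : ℕ) (x y : Fin d → ℤ) (w : (gridGraph d).Walk x y), w.length ≤ n →
        (∀ t ∈ w.support, t ∈ K₀) → x ∈ K₀ \ ⋃₀ {L | L ∈ T ∧ L ⊂ K₀} →
        y ∈ K₀ \ ⋃₀ {L | L ∈ T ∧ L ⊂ K₀} →
        Conn (K₀ \ ⋃₀ {L | L ∈ T ∧ L ⊂ K₀}) x y := by
      intro n
      induction n with
      | zero =>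
        intro x y w hlen hsupp hx hy
        cases w with
        | nil => exact Conn.refl' hx
        | cons h w' => rw [Walk.length_cons] at hlen; omega
      | succ n ih =>
        intro x y w hlen hsupp hx hy
        cases w with
        | nil => exact Conn.refl' hx
        | @cons _ r _ hadj w' =>
          have hsupp' : ∀ t ∈ w'.support, t ∈ K₀ := by
            intro t ht
            refine hsupp t ?_
            rw [Walk.support_cons]
            exact List.mem_cons_of_mem _ ht
          have hlen' : w'.length ≤ n := by rw [Walk.length_cons] at hlen; omega
          by_cases hrS : r ∈ K₀ \ ⋃₀ {L | L ∈ T ∧ L ⊂ K₀}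
          · exact (Conn.ofAdj hadj hx hrS).trans' (ih r y w' hlen' hsupp' hrS hy)
          · have hrK₀ : r ∈ K₀ := hsupp' r w'.start_mem_support
            have hrU : r ∈ ⋃₀ {L | L ∈ T ∧ L ⊂ K₀} := by
              by_contra hc
              exact hrS ⟨hrK₀, hc⟩
            obtain ⟨L, hLF, hrL⟩ := hrU
            obtain ⟨M, hMF, hLM, hMmax⟩ := hmax L hLF
            have hrM : r ∈ M := hLM hrL
            have hyM : y ∉ M := fun h => hy.2 ⟨M, hMF, h⟩
            obtain ⟨q, hqM, ⟨m, hmM, hqadj⟩, w₂, hw₂supp, hw₂len⟩ :=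
              aux_exit w' hrM hsupp' hyM
            have hxA : x ∈ Ann M := mem_Ann_of_adj (fun h => hx.2 ⟨M, hMF, h⟩) hrM hadj
            have hqA : q ∈ Ann M := mem_Ann_of_adj hqM hmM hqadj
            have h1 : Conn (K₀ \ ⋃₀ {L | L ∈ T ∧ L ⊂ K₀}) x q :=
              (ann_conn hd (htiles M hMF.1).1 (htiles M hMF.1).2.1
                (htiles M hMF.1).2.2 hxA hqA).mono (hAnnS M hMF hMmax)
            exact h1.trans' (ih q y w₂ (by omega) hw₂supp (hAnnS M hMF hMmax hqA) hy)
    rw [SimpleGraph.connected_iff]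
    constructor
    · intro a b
      have hreach := hconn.preconnected ⟨a.1, a.2.1⟩ ⟨b.1, b.2.1⟩
      obtain ⟨w, hwsupp⟩ := conn_of_induced_reachable hreach
      have hcs := CS w.length a.1 b.1 w le_rfl hwsupp a.2 b.2
      obtain ⟨w', hw'⟩ := hcs
      exact induced_reachable_of_conn w' hw' a.2 b.2
    · obtain ⟨w, hwS⟩ := hSne
      exact ⟨⟨w, hwS⟩⟩
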